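/- Let S = [X, Y] be a binary sequence of period 2^{n+1} with X, Y words of length 2^n. Then every cyclic sequence T of length 2^{n+2} satisfying D^{2^n}(T) = S has the form T = [Z, X+Z, X+Y+Z, Y+Z] for some binary word Z of length 2^n, and replacing Z by Z+X+Y gives the same cyclic sequence, so there are exactly 2^{2^n - 1} distinct such cyclic sequences. -/

import Mathlib

/-- The difference operator `D` on binary cyclic sequences. -/
def Dop (s : ℕ → ZMod 2) : ℕ → ZMod 2 := fun i => s (i + 1) - s i

/-- `d` is a period of the sequence `s`. -/
def IsPeriodOf (s : ℕ → ZMod 2) (d : ℕ) : Prop := ∀ i, s (i + d) = s i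

/-- `d` is the least (exact) period of `s`. -/
def IsLeastPeriod (s : ℕ → ZMod 2) (d : ℕ) : Prop :=
  0 < d ∧ IsPeriodOf s d ∧ ∀ e, 0 < e → IsPeriodOf s e → d ≤ e

lemma z2sub : ∀ a b : ZMod 2, a - b = a + b := by decide
lemma z2canc : ∀ a b c : ZMod 2, a + b + (b + c) = a + c := by decide
lemma z2aa : ∀ a b : ZMod 2, a + (a + b) = b := by decide
lemma z2ab : ∀ a b : ZMod 2, a + b + b = a := by decide
lemma z2solve : ∀ a b c : ZMod 2, c = a + b → a = c + b := by decide
lemma z2four : ∀ a b c : ZMod 2, b + (a + (b + (a + c))) = c := by decide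
lemma z2cancr : ∀ a b c : ZMod 2, a + c = b + c → a = b := by decide
lemma z2abc : ∀ a b c : ZMod 2, a + (a + b + c) = b + c := by decide
lemma z2ne : ∀ a b : ZMod 2, a ≠ 0 → b ≠ 0 → a + b = 0 := by decide
lemma z2eq : ∀ a b : ZMod 2, a + b = 0 → a = b := by decide

lemma DopPow (k : ℕ) (T : ℕ → ZMod 2) (i : ℕ) :
    Dop^[2 ^ k] T i = T (i + 2 ^ k) + T i := by
  induction k generalizing T i with
  | zero => simpa [Dop] using z2sub (T (i+1)) (T i)
  | succ k ih =>
    have h : (2:ℕ) ^ (k+1) = 2 ^ k + 2 ^ k := by ring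
    rw [h, Function.iterate_add_apply, ih, ih, ih, ← add_assoc i]
    exact z2canc _ _ _

lemma extUnique (N : ℕ) (hN : 0 < N) (S A B : ℕ → ZMod 2)
    (hA : ∀ i, A (i + N) = S i + A i) (hB : ∀ i, B (i + N) = S i + B i)
    (h : ∀ i < N, A i = B i) : ∀ i, A i = B i := by
  intro i
  induction i using Nat.strong_induction_on with
  | _ i ih =>
    by_cases hi : i < N
    · exact h i hi
    · have he : i - N + N = i := Nat.sub_add_cancel (le_of_not_gt hi)
      have := hA (i - N); have hb := hB (i - N)
      rw [he] at this hb
      rw [this, hb, ih (i - N) (by omega)]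

lemma periodMul (S : ℕ → ZMod 2) (p : ℕ) (hp : IsPeriodOf S p) :
    ∀ q i, S (i + p * q) = S i := by
  intro q
  induction q with
  | zero => simp
  | succ q ih =>
    intro i
    have : i + p * (q + 1) = (i + p * q) + p := by ring
    rw [this, hp, ih]

lemma leastDvd (S : ℕ → ZMod 2) (d e : ℕ) (h : IsLeastPeriod S d)
    (he : IsPeriodOf S e) : d ∣ e := by
  obtain ⟨hd, hpd, hmin⟩ := h
  have hr : IsPeriodOf S (e % d) := by
    intro i
    have h1 : S (i + e % d + d * (e / d)) = S (i + e % d) := periodMul S d hpd _ _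
    have h2 : i + e % d + d * (e / d) = i + e := by
      have := Nat.mod_add_div e d; omega
    rw [h2] at h1
    rw [← h1, he i]
  rcases Nat.eq_zero_or_pos (e % d) with h0 | h0
  · exact Nat.dvd_of_mod_eq_zero h0
  · have := hmin _ h0 hr
    have := Nat.mod_lt e hd
    omega

def Tseq (N : ℕ) (S Z : ℕ → ZMod 2) : ℕ → ZMod 2 :=
  fun i => Z (i % N) + (Finset.range (i / N)).sum (fun t => S (i % N + t * N))

lemma Tseq_lt (N : ℕ) (S Z : ℕ → ZMod 2) (r : ℕ) (hr : r < N) :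
    Tseq N S Z r = Z r := by
  simp [Tseq, Nat.mod_eq_of_lt hr, Nat.div_eq_of_lt hr]

lemma Tseq_rec (N : ℕ) (hN : 0 < N) (S Z : ℕ → ZMod 2) (i : ℕ) :
    Tseq N S Z (i + N) = S i + Tseq N S Z i := by
  unfold Tseq
  rw [Nat.add_mod_right, Nat.add_div_right _ hN, Finset.sum_range_succ]
  have : i % N + i / N * N = i := Nat.mod_add_div' i N
  rw [this]
  ring

def ext0 (N : ℕ) (Z : Fin N → ZMod 2) : ℕ → ZMod 2 :=
  fun i => if h : i < N then Z ⟨i, h⟩ else 0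


/-- Let `S = [X, Y]` be a binary sequence of (least) period `2^{n+1}` with `X, Y`
words of length `2^n`.  Every `2^{n+2}`-periodic sequence `T` with
`D^{2^n}(T) = S` has the form `T = [Z, X+Z, X+Y+Z, Y+Z]` for some binary word
`Z` of length `2^n`; replacing `Z` by `Z+X+Y` gives the same cyclic sequence
(a cyclic shift); and there are exactly `2^{2^n - 1}` distinct cyclic sequences
(shift-orbits) obtained this way. -/
theorem stmt4 (n : ℕ) (X Y S : ℕ → ZMod 2)
    (hSper : IsLeastPeriod S (2 ^ (n + 1)))
    (hSX : ∀ i < 2 ^ n, S i = X i)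
    (hSY : ∀ i < 2 ^ n, S (i + 2 ^ n) = Y i) :
    (∀ T : ℕ → ZMod 2, (∀ i, T (i + 2 ^ (n + 2)) = T i) → Dop^[2 ^ n] T = S →
      ∃ Z : ℕ → ZMod 2, ∀ i < 2 ^ n,
        T i = Z i ∧ T (i + 2 ^ n) = X i + Z i ∧
        T (i + 2 * 2 ^ n) = X i + Y i + Z i ∧ T (i + 3 * 2 ^ n) = Y i + Z i) ∧
    (∀ T T' : ℕ → ZMod 2,
      (∀ i, T (i + 2 ^ (n + 2)) = T i) → Dop^[2 ^ n] T = S →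
      (∀ i, T' (i + 2 ^ (n + 2)) = T' i) → Dop^[2 ^ n] T' = S →
      (∀ i < 2 ^ n, T' i = T i + X i + Y i) →
      (∃ k : ℕ, ∀ i, T' i = T (i + k))) ∧
    Nat.card {O : Set (ℕ → ZMod 2) // ∃ T : ℕ → ZMod 2,
        (∀ i, T (i + 2 ^ (n + 2)) = T i) ∧ Dop^[2 ^ n] T = S ∧
        O = {T' | ∃ k : ℕ, ∀ i, T' i = T (i + k)}} = 2 ^ (2 ^ n - 1) := by
  obtain ⟨hpos, hper2, hmin⟩ := hSper
  have hN : 0 < 2 ^ n := Nat.pow_pos (by norm_num)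
  -- S has period 2·2^n
  have hS2 : ∀ i, S (i + 2 * 2 ^ n) = S i := by
    intro i
    have := hper2 i
    rwa [show 2 ^ (n+1) = 2 * 2 ^ n by ring] at this
  -- recursion from the difference equation
  have hrec : ∀ T : ℕ → ZMod 2, Dop^[2 ^ n] T = S →
      ∀ i, T (i + 2 ^ n) = S i + T i := by
    intro T hT i
    have h1 : S i = T (i + 2 ^ n) + T i := by
      rw [← hT]; exact DopPow n T i
    exact z2solve _ _ _ h1
  -- values of a valid T on the four blocks
  have hvals : ∀ T : ℕ → ZMod 2, (∀ i, T (i + 2 ^ n) = S i + T i) →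
      ∀ i < 2 ^ n,
        T (i + 2 ^ n) = X i + T i ∧
        T (i + 2 * 2 ^ n) = X i + Y i + T i ∧
        T (i + 3 * 2 ^ n) = Y i + T i := by
    intro T hr i hi
    have v1 : T (i + 2 ^ n) = X i + T i := by rw [hr i, hSX i hi]
    have v2 : T (i + 2 * 2 ^ n) = X i + Y i + T i := by
      have e : i + 2 * 2 ^ n = (i + 2 ^ n) + 2 ^ n := by ring
      rw [e, hr, hSY i hi, v1]; ring
    have v3 : T (i + 3 * 2 ^ n) = Y i + T i := by
      have e : i + 3 * 2 ^ n = (i + 2 * 2 ^ n) + 2 ^ n := by ring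
      rw [e, hr, hS2 i, hSX i hi, v2]
      exact z2abc _ _ _
    exact ⟨v1, v2, v3⟩
  -- X and Y differ somewhere below 2^n
  have hW : ∃ j < 2 ^ n, X j + Y j ≠ 0 := by
    by_contra hc
    push_neg at hc
    have hXY : ∀ j < 2 ^ n, X j = Y j := fun j hj => z2eq _ _ (hc j hj)
    have hpN : IsPeriodOf S (2 ^ n) := by
      intro i
      have hper : IsPeriodOf S (2 * 2 ^ n) := fun m => hS2 m
      obtain ⟨q, r, hrlt, hi⟩ : ∃ q r, r < 2 * 2 ^ n ∧ i = 2 * 2 ^ n * q + r :=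
        ⟨i / (2 * 2 ^ n), i % (2 * 2 ^ n), Nat.mod_lt i (by positivity),
          ((Nat.div_add_mod i (2 * 2 ^ n)).symm)⟩
      have hSi : S i = S r := by
        rw [show i = r + 2 * 2 ^ n * q by omega]
        exact periodMul S _ hper q r
      have hSiN : S (i + 2 ^ n) = S (r + 2 ^ n) := by
        rw [show i + 2 ^ n = r + 2 ^ n + 2 * 2 ^ n * q by omega]
        exact periodMul S _ hper q _
      by_cases hcase : r < 2 ^ n
      · rw [hSi, hSiN, hSY r hcase, hSX r hcase, hXY r hcase]
      · obtain ⟨m, hm⟩ : ∃ m, r = m + 2 ^ n := ⟨r - 2 ^ n, by omega⟩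
        have hmlt : m < 2 ^ n := by omega
        have e1 : S (r + 2 ^ n) = X m := by
          rw [show r + 2 ^ n = m + 2 * 2 ^ n by omega, hS2, hSX m hmlt]
        have e2 : S r = Y m := by rw [hm, hSY m hmlt]
        rw [hSi, hSiN, e1, e2, hXY m hmlt]
    have := hmin _ hN hpN
    have h1 : (2:ℕ) ^ (n+1) = 2 * 2 ^ n := by ring
    omega
  refine ⟨?_, ?_, ?_⟩
  · -- Part 1
    intro T _ hTD
    refine ⟨T, fun i hi => ?_⟩
    obtain ⟨v1, v2, v3⟩ := hvals T (hrec T hTD) i hi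
    exact ⟨rfl, v1, v2, v3⟩
  · -- Part 2
    intro T T' _ hTD _ hT'D hshift
    refine ⟨2 ^ (n + 1), fun i => ?_⟩
    have hA := hrec T' hT'D
    have hB : ∀ i, (fun m => T (m + 2 ^ (n + 1))) (i + 2 ^ n)
        = S i + (fun m => T (m + 2 ^ (n + 1))) i := by
      intro i
      simp only
      have e : i + 2 ^ n + 2 ^ (n + 1) = (i + 2 ^ (n + 1)) + 2 ^ n := by ring
      rw [e, hrec T hTD, hper2]
    have hagree : ∀ i < 2 ^ n, T' i = (fun m => T (m + 2 ^ (n + 1))) i := by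
      intro i hi
      simp only
      obtain ⟨_, v2, _⟩ := hvals T (hrec T hTD) i hi
      rw [show i + 2 ^ (n + 1) = i + 2 * 2 ^ n by ring, v2, hshift i hi]
      ring
    exact extUnique (2 ^ n) hN S T' _ hA hB hagree i
  · -- Part 3
    obtain ⟨j, hjN, hWj⟩ := hW
    -- the construction
    have hTZrec : ∀ Z : Fin (2 ^ n) → ZMod 2, ∀ i,
        Tseq (2 ^ n) S (ext0 (2 ^ n) Z) (i + 2 ^ n)
          = S i + Tseq (2 ^ n) S (ext0 (2 ^ n) Z) i :=
      fun Z i => Tseq_rec (2 ^ n) hN S _ i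
    have hTZlt : ∀ Z : Fin (2 ^ n) → ZMod 2, ∀ r (hr : r < 2 ^ n),
        Tseq (2 ^ n) S (ext0 (2 ^ n) Z) r = Z ⟨r, hr⟩ := by
      intro Z r hr
      rw [Tseq_lt _ _ _ r hr, ext0, dif_pos hr]
    have hTZper : ∀ Z : Fin (2 ^ n) → ZMod 2, ∀ i,
        Tseq (2 ^ n) S (ext0 (2 ^ n) Z) (i + 2 ^ (n + 2))
          = Tseq (2 ^ n) S (ext0 (2 ^ n) Z) i := by
      intro Z i
      have e : i + 2 ^ (n + 2) = i + 2 ^ n + 2 ^ n + 2 ^ n + 2 ^ n := by ring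
      rw [e, hTZrec, hTZrec, hTZrec, hTZrec]
      rw [show i + 2 ^ n + 2 ^ n = i + 2 * 2 ^ n by ring, hS2,
        show i + 2 * 2 ^ n + 2 ^ n = (i + 2 ^ n) + 2 * 2 ^ n by ring, hS2]
      exact z2four _ _ _
    have hTZD : ∀ Z : Fin (2 ^ n) → ZMod 2,
        Dop^[2 ^ n] (Tseq (2 ^ n) S (ext0 (2 ^ n) Z)) = S := by
      intro Z
      funext i
      rw [DopPow, hTZrec]
      exact z2ab _ _
    have hcard : Nat.card {O : Set (ℕ → ZMod 2) // ∃ T : ℕ → ZMod 2,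
        (∀ i, T (i + 2 ^ (n + 2)) = T i) ∧ Dop^[2 ^ n] T = S ∧
        O = {T' | ∃ k : ℕ, ∀ i, T' i = T (i + k)}}
        = Nat.card {Z : Fin (2 ^ n) → ZMod 2 // Z ⟨j, hjN⟩ = 0} := by
      refine (Nat.card_eq_of_bijective
        (fun Z => ⟨{T' | ∃ k : ℕ, ∀ i, T' i = Tseq (2 ^ n) S (ext0 (2 ^ n) Z.1) (i + k)},
          Tseq (2 ^ n) S (ext0 (2 ^ n) Z.1), hTZper Z.1, hTZD Z.1, rfl⟩)
        ⟨?_, ?_⟩).symm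
      · -- injective
        intro Z Z' hZZ
        have hsets := congrArg Subtype.val hZZ
        simp only at hsets
        have hmem : (Tseq (2 ^ n) S (ext0 (2 ^ n) Z'.1)) ∈
            {T' | ∃ k : ℕ, ∀ i, T' i = Tseq (2 ^ n) S (ext0 (2 ^ n) Z'.1) (i + k)} :=
          ⟨0, fun i => by rw [Nat.add_zero]⟩
        rw [← hsets] at hmem
        obtain ⟨k, hk⟩ := hmem
        have hkper : IsPeriodOf S k := by
          intro i
          have h1 := hk (i + 2 ^ n)
          have h2 := hk i
          rw [hTZrec Z'.1 i, h2] at h1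
          rw [show i + 2 ^ n + k = (i + k) + 2 ^ n by ring, hTZrec Z.1] at h1
          exact z2cancr _ _ _ h1.symm
        obtain ⟨m, hm⟩ := leastDvd S (2 ^ (n + 1)) k ⟨hpos, hper2, hmin⟩ hkper
        have hperZ : IsPeriodOf (Tseq (2 ^ n) S (ext0 (2 ^ n) Z.1)) (2 ^ (n + 2)) :=
          hTZper Z.1
        rcases Nat.even_or_odd m with ⟨t, ht⟩ | ⟨t, ht⟩
        · -- k is a multiple of the full period: Z = Z'
          have hkk : k = 2 ^ (n + 2) * t := by subst hm ht; ring
          have hZeq : Z.1 = Z'.1 := by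
            funext r
            have hr := hk r.1
            rw [hTZlt Z'.1 r.1 r.2] at hr
            rw [show r.1 + k = r.1 + 2 ^ (n + 2) * t by rw [hkk]] at hr
            rw [periodMul _ _ hperZ t r.1, hTZlt Z.1 r.1 r.2] at hr
            simpa using hr.symm
          exact Subtype.ext hZeq
        · -- k ≡ 2^{n+1}: contradiction at j
          have hkk : k = 2 ^ (n + 1) + 2 ^ (n + 2) * t := by subst hm ht; ring
          exfalso
          have hr := hk j
          rw [hTZlt Z'.1 j hjN] at hr
          rw [show j + k = (j + 2 ^ (n + 1)) + 2 ^ (n + 2) * t by omega] at hr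
          rw [periodMul _ _ hperZ t _] at hr
          rw [show j + 2 ^ (n + 1) = (j + 2 ^ n) + 2 ^ n by ring, hTZrec Z.1,
            hTZrec Z.1, hTZlt Z.1 j hjN, hSY j hjN, hSX j hjN] at hr
          rw [Z.2, Z'.2] at hr
          apply hWj
          have : (0:ZMod 2) = Y j + X j := by simpa using hr
          rw [add_comm]
          exact this.symm
      · -- surjective
        rintro ⟨O, T, hTper, hTD, hO⟩
        have hTrec := hrec T hTD
        by_cases h0 : T j = 0
        · refine ⟨⟨fun r => T r.1, h0⟩, ?_⟩
          apply Subtype.ext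
          simp only
          have hTeq : Tseq (2 ^ n) S (ext0 (2 ^ n) (fun r : Fin (2 ^ n) => T r.1)) = T := by
            funext i
            exact extUnique (2 ^ n) hN S _ T (hTZrec _) hTrec
              (fun r hr => hTZlt _ r hr) i
          rw [hTeq, hO]
        · refine ⟨⟨fun r => T r.1 + X r.1 + Y r.1, ?_⟩, ?_⟩
          · simp only
            rw [add_assoc]
            exact z2ne _ _ h0 hWj
          · apply Subtype.ext
            simp only
            have hTeq : Tseq (2 ^ n) S
                (ext0 (2 ^ n) (fun r : Fin (2 ^ n) => T r.1 + X r.1 + Y r.1))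
                = fun i => T (i + 2 ^ (n + 1)) := by
              funext i
              refine extUnique (2 ^ n) hN S _ (fun m => T (m + 2 ^ (n + 1)))
                (hTZrec _) ?_ ?_ i
              · intro i
                show T (i + 2 ^ n + 2 ^ (n + 1)) = S i + T (i + 2 ^ (n + 1))
                have e : i + 2 ^ n + 2 ^ (n + 1) = (i + 2 ^ (n + 1)) + 2 ^ n := by ring
                rw [e, hTrec, hper2]
              · intro r hr
                rw [hTZlt _ r hr]
                simp only
                obtain ⟨_, v2, _⟩ := hvals T hTrec r hr
                rw [show r + 2 ^ (n + 1) = r + 2 * 2 ^ n by ring, v2]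
                ring
            rw [hTeq, hO]
            ext T'
            constructor
            · rintro ⟨k, hk⟩
              refine ⟨k + 2 ^ (n + 1), fun i => ?_⟩
              rw [hk i]
              show T (i + k + 2 ^ (n + 1)) = T (i + (k + 2 ^ (n + 1)))
              rw [show i + k + 2 ^ (n + 1) = i + (k + 2 ^ (n + 1)) by ring]
            · rintro ⟨k, hk⟩
              refine ⟨k + 2 ^ (n + 1), fun i => ?_⟩
              rw [hk i]
              show T (i + k) = T (i + (k + 2 ^ (n + 1)) + 2 ^ (n + 1))
              rw [show i + (k + 2 ^ (n + 1)) + 2 ^ (n + 1) = (i + k) + 2 ^ (n + 2) by ring,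
                hTper]
    rw [hcard]
    have e : {Z : Fin (2 ^ n) → ZMod 2 // Z ⟨j, hjN⟩ = 0}
        ≃ ({i : Fin (2 ^ n) // i ≠ ⟨j, hjN⟩} → ZMod 2) :=
      { toFun := fun Z i => Z.1 i.1
        invFun := fun g => ⟨fun i => if h : i = ⟨j, hjN⟩ then 0 else g ⟨i, h⟩, by simp⟩
        left_inv := fun Z => by
          apply Subtype.ext
          funext i
          by_cases h : i = ⟨j, hjN⟩
          · subst h; simp [Z.2]
          · simp [h]
        right_inv := fun g => by
          funext i
          simp [i.2] }
    rw [Nat.card_congr e, Nat.card_eq_fintype_card, Fintype.card_fun]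
    rw [Fintype.card_subtype_compl]
    simp
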